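/- For every k ∈ ℕ there exists F ∈ ℕ, F ≥ 1, such that the following holds. If φ : ℤ → Fin k is a colouring containing no almost-monochromatic positive homothet of ({0,1,2}, 0) — that is, there are no a ∈ ℤ and d ∈ ℤ, d ≥ 1, with φ(a + d) = φ(a + 2d) and φ(a) ≠ φ(a + d) — then every nonempty colour class of φ is a two-way infinite arithmetic progression {a + i·t : i ∈ ℤ} for some a ∈ ℤ and t ≥ 1, and moreover φ(x + F) = φ(x) for all x ∈ ℤ. -/

import Mathlib

private def Hfree {k : ℕ} (φ : ℤ → Fin k) : Prop :=
  ∀ a d : ℤ, 1 ≤ d → φ (a + d) = φ (a + 2 * d) → φ a = φ (a + d)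

private lemma step_down {k : ℕ} {φ : ℤ → Fin k} (hH : Hfree φ) {x d : ℤ}
    (hd : 1 ≤ d) (h : φ x = φ (x + d)) : φ (x - d) = φ x := by
  have e1 : x = (x - d) + d := by ring
  have e2 : x + d = (x - d) + 2 * d := by ring
  have := hH (x - d) d hd (by rw [← e1, ← e2]; exact h)
  rw [← e1] at this; exact this

private lemma down_all {k : ℕ} {φ : ℤ → Fin k} (hH : Hfree φ) {x d : ℤ}
    (hd : 1 ≤ d) (h : φ x = φ (x + d)) :
    ∀ n : ℕ, φ (x - (n : ℤ) * d) = φ x ∧ φ (x - (n : ℤ) * d) = φ (x - (n : ℤ) * d + d) := by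
  intro n
  induction n with
  | zero =>
    have e : x - ((0 : ℕ) : ℤ) * d = x := by push_cast; ring
    rw [e]; exact ⟨rfl, h⟩
  | succ n ih =>
    have hs := step_down hH hd ih.2
    have e : x - (((n : ℕ) + 1 : ℕ) : ℤ) * d = x - (n : ℤ) * d - d := by push_cast; ring
    have e2 : x - (n : ℤ) * d - d + d = x - (n : ℤ) * d := by ring
    rw [e, hs, e2]
    exact ⟨ih.1, rfl⟩

private lemma le_all {k : ℕ} {φ : ℤ → Fin k} (hH : Hfree φ) {x : ℤ}
    (h : φ x = φ (x + 1)) : ∀ y ≤ x + 1, φ y = φ x := by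
  intro y hy
  rcases eq_or_lt_of_le hy with rfl | hy'
  · exact h.symm
  · have hyx : y ≤ x := by omega
    have := (down_all hH le_rfl h ((x - y).toNat)).1
    have e : x - (((x - y).toNat : ℤ)) * 1 = y := by
      have := Int.toNat_of_nonneg (show 0 ≤ x - y by omega)
      omega
    rwa [e] at this

private lemma descent {k : ℕ} {φ : ℤ → Fin k} (hH : Hfree φ) {p q : ℤ}
    (hpq : p < q) (h : φ p = φ q) :
    ∀ m : ℕ, φ (q - (m : ℤ) * (q - p)) = φ q ∧
      φ (q - ((m : ℤ) + 1) * (q - p)) = φ (q - (m : ℤ) * (q - p)) := by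
  intro m
  induction m with
  | zero =>
    have e0 : q - ((0 : ℕ) : ℤ) * (q - p) = q := by push_cast; ring
    have e1 : q - (((0 : ℕ) : ℤ) + 1) * (q - p) = p := by push_cast; ring
    rw [e0, e1]; exact ⟨rfl, h⟩
  | succ m ih =>
    have e : q - ((((m : ℕ) + 1 : ℕ)) : ℤ) * (q - p) = q - ((m : ℤ) + 1) * (q - p) := by
      push_cast; ring
    rw [e]
    refine ⟨ih.2.trans ih.1, ?_⟩
    -- apply hH at a = q - (m+3)... a = q - (m+2)*(q-p), step q - p
    have e1 : q - ((m : ℤ) + 1 + 1) * (q - p) + (q - p) = q - ((m : ℤ) + 1) * (q - p) := by ring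
    have e2 : q - ((m : ℤ) + 1 + 1) * (q - p) + 2 * (q - p) = q - (m : ℤ) * (q - p) := by ring
    have := hH (q - ((m : ℤ) + 1 + 1) * (q - p)) (q - p) (by omega)
      (by rw [e1, e2]; exact ih.2)
    rw [e1] at this
    exact this

private lemma up {k : ℕ} {φ : ℤ → Fin k} (hH : Hfree φ) {x : ℤ}
    (h : φ x = φ (x + 1)) : φ (x + 1) = φ (x + 2) := by
  by_contra hne
  -- every point ≤ x+1 has colour φ x
  have hA : ∀ y ≤ x + 1, φ y = φ x := le_all hH h
  -- every repeated colour equals φ x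
  have hB : ∀ p q : ℤ, p < q → φ p = φ q → φ q = φ x := by
    intro p q hpq hfeq
    rcases le_or_gt q (x + 1) with h' | h'
    · exact hA q h'
    · set m : ℕ := (q - (x + 1)).toNat with hm
      have hmz : (m : ℤ) = q - x - 1 := by
        rw [hm]; rw [Int.toNat_of_nonneg (by omega)]; ring
      have hmul : (m : ℤ) * 1 ≤ (m : ℤ) * (q - p) :=
        mul_le_mul_of_nonneg_left (by omega) (by omega)
      have hle : q - (m : ℤ) * (q - p) ≤ x + 1 := by omega
      have h1 := (descent hH hpq hfeq m).1
      exact ((hA _ hle).symm.trans h1).symm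
  -- far to the right there are points of colour ≠ φ (x+1)
  have hC : ∀ M : ℤ, ∃ n, M ≤ n ∧ x + 2 ≤ n ∧ φ n ≠ φ (x + 1) := by
    by_contra hC'
    push_neg at hC'
    obtain ⟨M, hM⟩ := hC'
    set M' := max M (x + 2) with hM'
    have h1 : φ M' = φ (x + 1) := hM M' (le_max_left _ _) (le_max_right _ _)
    have h2 : φ (M' + 1) = φ (x + 1) := hM (M' + 1) (by omega) (by omega)
    have hpair : φ M' = φ (M' + 1) := h1.trans h2.symm
    have := le_all hH hpair (x + 2) (by omega)
    exact hne ((this.trans h1).symm)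
  choose f hf1 hf2 hf3 using hC
  -- strictly increasing sequence of points with colour ≠ φ (x+1)
  set g : ℕ → ℤ := fun i => Nat.rec (f (x + 2)) (fun _ prev => f (prev + 1)) i with hg
  have hgs : ∀ i, g (i + 1) = f (g i + 1) := fun i => rfl
  have hg0 : g 0 = f (x + 2) := rfl
  have hmono : StrictMono g := by
    apply strictMono_nat_of_lt_succ
    intro i
    have := hf1 (g i + 1)
    rw [hgs]; omega
  have hgne : ∀ i, φ (g i) ≠ φ (x + 1) := by
    intro i; cases i with
    | zero => rw [hg0]; exact hf3 _
    | succ i => rw [hgs]; exact hf3 _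
  -- injectivity into Fin k
  have hinj : Function.Injective (fun i : Fin (k + 1) => φ (g i.val)) := by
    intro i j hij
    by_contra hne'
    have hij' : g i.val ≠ g j.val := by
      intro hgeq
      exact hne' (Fin.ext (hmono.injective hgeq))
    rcases lt_or_gt_of_ne hij' with hlt | hlt
    · exact hgne j.val ((hB _ _ hlt hij).trans h)
    · exact hgne i.val ((hB _ _ hlt (by exact hij.symm)).trans h)
  have := Fintype.card_le_of_injective _ hinj
  simp [Fintype.card_fin] at this

private lemma hfree_comp {k : ℕ} {φ : ℤ → Fin k} (hH : Hfree φ) (x t : ℤ)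
    (ht : 1 ≤ t) : Hfree (fun n : ℤ => φ (x + n * t)) := by
  intro a e he heq
  have h1 : x + (a + e) * t = (x + a * t) + e * t := by ring
  have h2 : x + (a + 2 * e) * t = (x + a * t) + 2 * (e * t) := by ring
  have hpos : 1 ≤ e * t := by
    have := mul_pos (show (0 : ℤ) < e by omega) (show (0 : ℤ) < t by omega)
    omega
  have := hH (x + a * t) (e * t) hpos (by rw [← h1, ← h2]; exact heq)
  show φ (x + a * t) = φ (x + (a + e) * t)
  rw [h1]; exact this

private lemma prop_all {k : ℕ} {φ : ℤ → Fin k} (hH : Hfree φ) {x d : ℤ}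
    (hd : 1 ≤ d) (h : φ x = φ (x + d)) : ∀ n : ℤ, φ (x + n * d) = φ x := by
  set ψ : ℤ → Fin k := fun n : ℤ => φ (x + n * d) with hψ
  have hψH : Hfree ψ := hfree_comp hH x d hd
  have h01 : ψ 0 = ψ 1 := by
    show φ (x + 0 * d) = φ (x + 1 * d)
    have e0 : x + 0 * d = x := by ring
    have e1 : x + 1 * d = x + d := by ring
    rw [e0, e1]; exact h
  have key : ∀ n : ℤ, ψ n = ψ 0 ∧ ψ (n + 1) = ψ 0 := by
    intro n
    induction n using Int.induction_on with
    | zero => exact ⟨rfl, h01.symm⟩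
    | succ i ih =>
      have hpair : ψ (i : ℤ) = ψ ((i : ℤ) + 1) := ih.1.trans ih.2.symm
      have := up hψH hpair
      have e : ((i : ℤ) + 1) + 1 = (i : ℤ) + 2 := by ring
      exact ⟨ih.2, by rw [e]; exact this.symm.trans ih.2⟩
    | pred i ih =>
      have hpair : ψ (-(i : ℤ)) = ψ (-(i : ℤ) + 1) := ih.1.trans ih.2.symm
      have hs := step_down hψH le_rfl hpair
      have e1 : -(i : ℤ) - 1 = -(i : ℤ) - 1 := rfl
      refine ⟨by rw [show (-(i:ℤ) - 1) = -(i:ℤ) - 1 from rfl]; exact hs.trans ih.1, ?_⟩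
      have e2 : -(i : ℤ) - 1 + 1 = -(i : ℤ) := by ring
      rw [e2]; exact ih.1
  intro n
  have := (key n).1
  have e0 : x + 0 * d = x := by ring
  calc φ (x + n * d) = ψ n := rfl
    _ = ψ 0 := this
    _ = φ x := by show φ (x + 0 * d) = φ x; rw [e0]

private lemma iterate_period {k : ℕ} {φ : ℤ → Fin k} {p : ℤ}
    (h : ∀ x, φ (x + p) = φ x) : ∀ (m : ℕ) (x : ℤ), φ (x + (m : ℤ) * p) = φ x := by
  intro m
  induction m with
  | zero => intro x; norm_num
  | succ m ih =>
    intro x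
    have e : x + (((m : ℕ) + 1 : ℕ) : ℤ) * p = (x + p) + (m : ℤ) * p := by push_cast; ring
    rw [e, ih (x + p)]
    exact h x

private lemma classAP {k : ℕ} {φ : ℤ → Fin k} (hH : Hfree φ) (c : Fin k)
    {x0 : ℤ} (hx0 : φ x0 = c) {d0 : ℕ} (hd0 : 1 ≤ d0) (hpair : φ (x0 + (d0 : ℤ)) = c) :
    ∃ t : ℕ, 1 ≤ t ∧ t ≤ d0 ∧ ∃ a : ℤ, φ a = c ∧
      ∀ z : ℤ, φ z = c ↔ ∃ i : ℤ, z = a + i * (t : ℤ) := by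
  classical
  set P : ℕ → Prop := fun m => 1 ≤ m ∧ ∃ y : ℤ, φ y = c ∧ φ (y + (m : ℤ)) = c with hP
  have hex : ∃ m, P m := ⟨d0, hd0, x0, hx0, hpair⟩
  set t : ℕ := Nat.find hex with htdef
  obtain ⟨ht1, y0, hy0, hy0t⟩ : P t := Nat.find_spec hex
  have htle : t ≤ d0 := Nat.find_le ⟨hd0, x0, hx0, hpair⟩
  have htz : (1 : ℤ) ≤ (t : ℤ) := by exact_mod_cast ht1
  have hAP : ∀ n : ℤ, φ (y0 + n * (t : ℤ)) = c := by
    intro n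
    exact (prop_all hH htz (hy0.trans hy0t.symm) n).trans hy0
  refine ⟨t, ht1, htle, y0, hy0, fun z => ⟨?_, ?_⟩⟩
  · intro hz
    set r : ℤ := (z - y0) % (t : ℤ) with hr
    set n : ℤ := (z - y0) / (t : ℤ) with hn
    have hid : (t : ℤ) * n + r = z - y0 := Int.mul_ediv_add_emod (z - y0) (t : ℤ)
    have hr0 : 0 ≤ r := Int.emod_nonneg _ (by omega)
    have hrt : r < (t : ℤ) := Int.emod_lt_of_pos _ (by omega)
    rcases eq_or_lt_of_le hr0 with hr' | hr'
    · exact ⟨n, by linear_combination -hid - hr'⟩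
    · exfalso
      have hw : φ (y0 + n * (t : ℤ)) = c := hAP n
      have hwr : φ ((y0 + n * (t : ℤ)) + r) = c := by
        have e : (y0 + n * (t : ℤ)) + r = z := by linear_combination hid
        rw [e]; exact hz
      have hPr : P r.toNat := by
        refine ⟨by omega, y0 + n * (t : ℤ), hw, ?_⟩
        rwa [show ((r.toNat : ℕ) : ℤ) = r from Int.toNat_of_nonneg hr0]
      exact Nat.find_min hex (show r.toNat < t by omega) hPr
  · rintro ⟨i, rfl⟩
    exact hAP i

private def Gf : ℕ → ℕ
  | 0 => 1
  | (k + 1) => Nat.factorial (k + 1) * Gf k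

private lemma Gf_pos : ∀ k, 1 ≤ Gf k
  | 0 => le_rfl
  | (k + 1) => Nat.one_le_iff_ne_zero.mpr
      (Nat.mul_ne_zero (Nat.factorial_ne_zero _) (Nat.one_le_iff_ne_zero.mp (Gf_pos k)))

private lemma per : ∀ (k : ℕ) (φ : ℤ → Fin k), Hfree φ → ∀ x : ℤ, φ (x + (Gf k : ℤ)) = φ x := by
  intro k
  induction k with
  | zero => intro φ _ x; exact (φ 0).elim0
  | succ k IH =>
    intro φ hH
    -- pigeonhole: two equal colours among 0,...,k+1
    obtain ⟨i, j, hij, hfeq⟩ := Fintype.exists_ne_map_eq_of_card_lt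
      (fun i : Fin (k + 2) => φ (i.val : ℤ)) (by simp)
    have hploc : ∃ p q : ℤ, p < q ∧ q - p ≤ (k : ℤ) + 1 ∧ φ p = φ q := by
      rcases lt_or_gt_of_ne (fun h => hij (Fin.ext h) : i.val ≠ j.val) with hlt | hlt
      · exact ⟨i.val, j.val, by exact_mod_cast hlt,
          by have := j.isLt; have := i.isLt; omega, hfeq⟩
      · exact ⟨j.val, i.val, by exact_mod_cast hlt,
          by have := j.isLt; have := i.isLt; omega, hfeq.symm⟩
    obtain ⟨p, q, hpq, hqp, hpqeq⟩ := hploc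
    set d0 : ℕ := (q - p).toNat with hd0
    have hd0z : ((d0 : ℕ) : ℤ) = q - p := Int.toNat_of_nonneg (by omega)
    have hd01 : 1 ≤ d0 := by omega
    have hd0le : d0 ≤ k + 1 := by omega
    have hpair : φ (p + (d0 : ℤ)) = φ p := by
      rw [show p + ((d0 : ℕ) : ℤ) = q by omega]; exact hpqeq.symm
    obtain ⟨t, ht1, htle, y0, hy0, hiff⟩ := classAP hH (φ p) rfl hd01 hpair
    have htk : t ≤ k + 1 := le_trans htle hd0le
    have htz : (1 : ℤ) ≤ (t : ℤ) := by exact_mod_cast ht1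
    -- step period t * Gf k
    have hstep : ∀ z : ℤ, φ (z + ((t * Gf k : ℕ) : ℤ)) = φ z := by
      intro z
      by_cases hz : ∃ n : ℤ, z = y0 + n * (t : ℤ)
      · obtain ⟨n, rfl⟩ := hz
        have h1 : φ (y0 + n * (t : ℤ)) = φ p := (hiff _).mpr ⟨n, rfl⟩
        have h2 : φ (y0 + n * (t : ℤ) + ((t * Gf k : ℕ) : ℤ)) = φ p :=
          (hiff _).mpr ⟨n + (Gf k : ℤ), by push_cast; ring⟩
        exact h2.trans h1.symm
      · set ψ : ℤ → Fin (k + 1) := fun n : ℤ => φ (z + n * (t : ℤ)) with hψ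
        have hψH : Hfree ψ := hfree_comp hH z (t : ℤ) htz
        have hψc : ∀ n : ℤ, ψ n ≠ φ p := by
          intro n hn
          obtain ⟨i', hi'⟩ := (hiff _).mp hn
          exact hz ⟨i' - n, by linear_combination hi'⟩
        have hlast : ∀ n : ℤ, Equiv.swap (φ p) (Fin.last k) (ψ n) ≠ Fin.last k := by
          intro n hsw
          apply hψc n
          have := congrArg (Equiv.swap (φ p) (Fin.last k)) hsw
          rwa [Equiv.swap_apply_self, Equiv.swap_apply_right] at this
        set χ : ℤ → Fin k := fun n => Fin.castPred _ (hlast n) with hχ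
        have hrec : ∀ a b : ℤ, χ a = χ b ↔ ψ a = ψ b := by
          intro a b
          constructor
          · intro hab
            exact (Equiv.swap _ _).injective (Fin.castPred_inj.mp hab)
          · intro hab
            apply Fin.castPred_inj.mpr
            exact congrArg _ hab
        have hχH : Hfree χ := by
          intro a e he heq
          exact (hrec _ _).mpr (hψH a e he ((hrec _ _).mp heq))
        have hper := IH χ hχH 0
        have hψper : ψ (0 + (Gf k : ℤ)) = ψ 0 := (hrec _ _).mp hper
        show φ (z + ((t * Gf k : ℕ) : ℤ)) = φ z
        have e1 : z + ((t * Gf k : ℕ) : ℤ) = z + (0 + (Gf k : ℤ)) * (t : ℤ) := by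
          push_cast; ring
        have e2 : z = z + 0 * (t : ℤ) := by ring
        rw [e1, show z + 0 * (t:ℤ) = z from by ring] at *
        calc φ (z + (0 + (Gf k : ℤ)) * (t : ℤ)) = ψ (0 + (Gf k : ℤ)) := rfl
          _ = ψ 0 := hψper
          _ = φ z := by show φ (z + 0 * (t:ℤ)) = φ z; rw [show z + 0 * (t:ℤ) = z from by ring]
    -- now iterate
    have hdvd : t ∣ Nat.factorial (k + 1) := Nat.dvd_factorial (by omega) htk
    obtain ⟨s, hs⟩ := hdvd
    intro x
    have hiter := iterate_period hstep s x
    have e : x + ((Gf (k + 1) : ℕ) : ℤ) = x + (s : ℤ) * ((t * Gf k : ℕ) : ℤ) := by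
      have : Gf (k + 1) = s * (t * Gf k) := by
        show Nat.factorial (k + 1) * Gf k = s * (t * Gf k)
        rw [hs]; ring
      rw [this]; push_cast; ring
    rw [e]; exact hiter

/-- For every `k` there is `F ≥ 1` such that any `k`-colouring of
`ℤ` with no almost-monochromatic positive homothet of `({0,1,2}, 0)` has every
nonempty colour class a two-way infinite arithmetic progression, and is periodic
with period `F`. -/
theorem colour_classes_are_APs (k : ℕ) :
    ∃ F : ℕ, 1 ≤ F ∧ ∀ φ : ℤ → Fin k,
      (¬ ∃ a d : ℤ, 1 ≤ d ∧ φ (a + d) = φ (a + 2 * d) ∧ φ a ≠ φ (a + d)) →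
      (∀ c : Fin k, (∃ x, φ x = c) →
        ∃ (a t : ℤ), 1 ≤ t ∧ {x : ℤ | φ x = c} = {x : ℤ | ∃ i : ℤ, x = a + i * t}) ∧
      (∀ x : ℤ, φ (x + (F : ℤ)) = φ x) := by
  refine ⟨Gf k, Gf_pos k, ?_⟩
  intro φ hno
  have hH : Hfree φ := by
    intro a d hd heq
    by_contra hne
    exact hno ⟨a, d, hd, heq, hne⟩
  have hper := per k φ hH
  refine ⟨?_, hper⟩
  intro c hc
  obtain ⟨x, hx⟩ := hc
  have hpair : φ (x + ((Gf k : ℕ) : ℤ)) = c := (hper x).trans hx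
  obtain ⟨t, ht1, _, a, _, hiff⟩ := classAP hH c hx (Gf_pos k) hpair
  refine ⟨a, (t : ℤ), by exact_mod_cast ht1, ?_⟩
  ext z
  simp only [Set.mem_setOf_eq]
  exact hiff z
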